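/- Let L_1, L_2 be nonzero operators in K[∂;δ] of orders r_1, r_2, and let ℓ = ord(lclm(L_1,L_2)). Then a maximal K-linearly independent subset of {∂^{r_2}L_1, ..., ∂L_1, L_1, ∂^{r_1}L_2, ..., ∂L_2, L_2} is given by {∂^{r_2}L_1, ..., L_1} ∪ {∂^{ℓ−r_2−1}L_2, ..., L_2}; in particular, the K-span of this family has dimension r_2 + ℓ − r_2 − 1 + 2 = ℓ + 1... i.e., the dimension of the K-span of {∂^j L_1 : 0 ≤ j ≤ r_2} ∪ {∂^j L_2 : 0 ≤ j ≤ r_1} in K[∂;δ]_{≤ r_1+r_2} equals ℓ + 1. -/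

import Mathlib

/-
Setting: a differential field `(K, δ)` (δ additive and Leibniz), and the ring
`A = K[∂;δ]` of linear differential operators, axiomatised as follows:
a ring `A`, a ring embedding `ι : K →+* A`, an element `D = ∂` satisfying the
commutation rule `∂ a = a ∂ + δ(a)`, together with the fact that every element
of `A` is uniquely of the form `Σ ι(a_i) ∂^i` (the bijection `e`).
-/

noncomputable section

variable {K A : Type*}

/-- Order of a differential operator, read off from its coefficient expansion
(`e.symm x` is the finitely supported family of coefficients of `x` w.r.t. the powers `∂^i`). -/
def ordOf [Zero K] (e : (ℕ →₀ K) ≃ A) (x : A) : ℕ :=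
  (e.symm x).support.sup id

/-- `φ_n` : the row vector `(a_n, a_{n-1}, ..., a_0)` of an operator of order `≤ n`. -/
def phiV [Zero K] (e : (ℕ →₀ K) ≃ A) (n : ℕ) (x : A) : Fin (n + 1) → K :=
  fun j => e.symm x (n - (j : ℕ))

/-- Inverse of `φ_n` : the operator with coefficient vector `(a_n, ..., a_0)`. -/
def phiInv [AddCommMonoid K] (e : (ℕ →₀ K) ≃ A) (n : ℕ) (v : Fin (n + 1) → K) : A :=
  e (∑ j : Fin (n + 1), Finsupp.single (n - (j : ℕ)) (v j))

/-- The Sylvester-type matrix `S_n(P)` of an operator `P` of order `m`: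
rows are `φ_n(∂^{n-m} P), ..., φ_n(P)`. -/
def Syl [Zero K] [Monoid A] (e : (ℕ →₀ K) ≃ A) (D : A) (n m : ℕ) (P : A) :
    Matrix (Fin (n - m + 1)) (Fin (n + 1)) K :=
  Matrix.of fun i j => phiV e n (D ^ (n - m - (i : ℕ)) * P) j

/-- The block matrix `M_n` with diagonal blocks `S_n(L_i)` and a last block row
of negated identity matrices `S_n(-1)`. -/
def Mmat [Field K] [Ring A] (e : (ℕ →₀ K) ≃ A) (D : A) {k : ℕ}
    (L : Fin k → A) (r : Fin k → ℕ) (n : ℕ) :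
    Matrix ((Σ i : Fin k, Fin (n - r i + 1)) ⊕ Fin (n + 1)) (Fin k × Fin (n + 1)) K :=
  Matrix.of fun row col =>
    match row with
    | Sum.inl ⟨i, a⟩ => if i = col.1 then Syl e D n (r i) (L i) a col.2 else 0
    | Sum.inr a => if (a : ℕ) = (col.2 : ℕ) then -1 else 0

/-- `M` is a (nonzero) common left multiple of the family `L`. -/
def IsCLM [Ring A] {k : ℕ} (L : Fin k → A) (M : A) : Prop :=
  M ≠ 0 ∧ ∀ i, ∃ Q, M = Q * L i

/-- `M` is a least common left multiple of the family `L`: a common left multiple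
of minimal order. -/
def IsLCLM [Field K] [Ring A] (e : (ℕ →₀ K) ≃ A) {k : ℕ} (L : Fin k → A) (M : A) : Prop :=
  IsCLM L M ∧ ∀ M', IsCLM L M' → ordOf e M ≤ ordOf e M'

end
noncomputable section
variable {K A : Type*}

section Basics
variable [Field K] [Ring A]
variable (δ : K →+ K) (ι : K →+* A) (D : A) (e : (ℕ →₀ K) ≃ A)
variable (hcomm : ∀ a : K, D * ι a = ι a * D + ι (δ a))
variable (he : ∀ f : ℕ →₀ K, e f = f.sum fun i a => ι a * D ^ i)
include hcomm he
set_option linter.unusedSectionVars false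

lemma e_add (f g : ℕ →₀ K) : e (f + g) = e f + e g := by
  rw [he, he, he]
  exact Finsupp.sum_add_index' (fun i => by simp) (fun i a b => by simp [add_mul])

/-- package `e` as an additive equivalence -/
def EA : (ℕ →₀ K) ≃+ A :=
  { e with map_add' := e_add δ ι D e hcomm he }

lemma EA_symm_apply (x : A) : (EA δ ι D e hcomm he).symm x = e.symm x := rfl

lemma esymm_add (x y : A) : e.symm (x + y) = e.symm x + e.symm y :=
  map_add (EA δ ι D e hcomm he).symm x y

lemma esymm_zero : e.symm (0 : A) = 0 := map_zero (EA δ ι D e hcomm he).symm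

lemma esymm_neg (x : A) : e.symm (-x) = -e.symm x := map_neg (EA δ ι D e hcomm he).symm x

lemma esymm_sub (x y : A) : e.symm (x - y) = e.symm x - e.symm y :=
  map_sub (EA δ ι D e hcomm he).symm x y

lemma e_smul (a : K) (f : ℕ →₀ K) : e (a • f) = ι a * e f := by
  rw [he, he, Finsupp.mul_sum]
  rw [Finsupp.sum_smul_index (fun i => by simp)]
  exact Finsupp.sum_congr fun i _ => by rw [map_mul, mul_assoc]

lemma esymm_iota_mul (a : K) (x : A) : e.symm (ι a * x) = a • e.symm x := by
  apply e.injective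
  rw [e_smul δ ι D e hcomm he, Equiv.apply_symm_apply, Equiv.apply_symm_apply]

def shiftδ (δ : K →+ K) (f : ℕ →₀ K) : ℕ →₀ K :=
  Finsupp.mapDomain Nat.succ f + Finsupp.mapRange δ δ.map_zero f

lemma e_shiftδ (f : ℕ →₀ K) : e (shiftδ δ f) = D * e f := by
  rw [shiftδ, e_add δ ι D e hcomm he, he, he, he, Finsupp.mul_sum]
  rw [Finsupp.sum_mapDomain_index_inj Nat.succ_injective]
  rw [Finsupp.sum_mapRange_index (fun i => by simp)]
  rw [← Finsupp.sum_add]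
  refine Finsupp.sum_congr fun i _ => ?_
  rw [← mul_assoc, hcomm, add_mul, mul_assoc, ← pow_succ']

lemma esymm_D_mul (x : A) : e.symm (D * x) = shiftδ δ (e.symm x) := by
  apply e.injective
  rw [e_shiftδ δ ι D e hcomm he, Equiv.apply_symm_apply, Equiv.apply_symm_apply]


omit hcomm he

section OrdF
variable {δ}

/-- order of a finsupp -/
def ordF (f : ℕ →₀ K) : ℕ := f.support.sup id



lemma ordF_eq (x : A) : ordOf e x = ordF (e.symm x) := rfl

lemma coeff_eq_zero_of_ordF_lt {f : ℕ →₀ K} {i : ℕ} (h : ordF f < i) : f i = 0 := by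
  by_contra hne
  have := Finset.le_sup (f := id) (Finsupp.mem_support_iff.2 hne)
  simp only [id] at this
  rw [ordF] at h
  omega

lemma lead_ne_zero {f : ℕ →₀ K} (h : f ≠ 0) : f (ordF f) ≠ 0 := by
  obtain ⟨i, hi⟩ := Finsupp.support_nonempty_iff.2 h
  obtain ⟨b, hb, hbe⟩ := Finset.exists_mem_eq_sup f.support ⟨i, hi⟩ id
  rw [ordF, hbe]
  exact Finsupp.mem_support_iff.1 hb

lemma ordF_lt_of_coeff_zero {f : ℕ →₀ K} {m : ℕ} (h : f ≠ 0)
    (hz : ∀ j, m ≤ j → f j = 0) : ordF f < m := by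
  by_contra hc
  exact lead_ne_zero h (hz _ (by omega))

lemma ordF_le_of_coeff_zero {f : ℕ →₀ K} {m : ℕ}
    (hz : ∀ j, m < j → f j = 0) : ordF f ≤ m := by
  refine Finset.sup_le fun i hi => ?_
  simp only [id]
  by_contra hc
  exact Finsupp.mem_support_iff.1 hi (hz i (by omega))

lemma shiftδ_apply_succ (f : ℕ →₀ K) (i : ℕ) :
    shiftδ δ f (i + 1) = f i + δ (f (i + 1)) := by
  simp [shiftδ, Finsupp.mapDomain_apply Nat.succ_injective f i]

lemma shiftδ_apply_zero (f : ℕ →₀ K) : shiftδ δ f 0 = δ (f 0) := by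
  have : (0 : ℕ) ∉ Set.range Nat.succ := by simp [Nat.succ_ne_zero]
  simp [shiftδ, Finsupp.mapDomain_notin_range _ _ this]

lemma shiftδ_lead {f : ℕ →₀ K} (h : f ≠ 0) :
    shiftδ δ f (ordF f + 1) = f (ordF f) := by
  rw [shiftδ_apply_succ, coeff_eq_zero_of_ordF_lt (i := ordF f + 1) (by omega), map_zero, add_zero]

lemma shiftδ_ne_zero {f : ℕ →₀ K} (h : f ≠ 0) : shiftδ δ f ≠ 0 := by
  intro h0
  apply lead_ne_zero h
  have := congrArg (fun g : ℕ →₀ K => g (ordF f + 1)) h0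
  simpa [shiftδ_lead h] using this

lemma ordF_shiftδ {f : ℕ →₀ K} (h : f ≠ 0) : ordF (shiftδ δ f) = ordF f + 1 := by
  have hub : ∀ j, ordF f + 1 < j → shiftδ δ f j = 0 := by
    intro j hj
    obtain ⟨i, rfl⟩ : ∃ i, j = i + 1 := ⟨j - 1, by omega⟩
    rw [shiftδ_apply_succ, coeff_eq_zero_of_ordF_lt (by omega),
      coeff_eq_zero_of_ordF_lt (by omega), map_zero, add_zero]
  have h1 : ordF (shiftδ δ f) ≤ ordF f + 1 := ordF_le_of_coeff_zero hub
  have h2 : ordF f + 1 ≤ ordF (shiftδ δ f) := by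
    by_contra hc
    exact lead_ne_zero h (by rw [← shiftδ_lead (δ := δ) h]; exact coeff_eq_zero_of_ordF_lt (by omega))
  omega

end OrdF

lemma le_ordF_of_ne {f : ℕ →₀ K} {j : ℕ} (h : f j ≠ 0) : j ≤ ordF f := by
  have := Finset.le_sup (f := id) (Finsupp.mem_support_iff.2 h)
  simpa [ordF] using this

include hcomm he

lemma esymm_eq_zero_iff (x : A) : e.symm x = 0 ↔ x = 0 := by
  constructor
  · intro h; have := congrArg e h; rwa [Equiv.apply_symm_apply, ← esymm_zero δ ι D e hcomm he,
      Equiv.apply_symm_apply] at this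
  · rintro rfl; exact esymm_zero δ ι D e hcomm he

lemma Dpow_mul (k : ℕ) {x : A} (hx : x ≠ 0) :
    D ^ k * x ≠ 0 ∧ ordOf e (D ^ k * x) = k + ordOf e x ∧
      e.symm (D ^ k * x) (k + ordOf e x) = e.symm x (ordOf e x) := by
  induction k with
  | zero => simpa using hx
  | succ k ih =>
    obtain ⟨h0, hord, hlead⟩ := ih
    have hfne : e.symm (D ^ k * x) ≠ 0 :=
      fun h => h0 ((esymm_eq_zero_iff δ ι D e hcomm he _).1 h)
    have hx2 : D ^ (k + 1) * x = D * (D ^ k * x) := by rw [pow_succ', mul_assoc]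
    have hD := esymm_D_mul δ ι D e hcomm he (D ^ k * x)
    refine ⟨?_, ?_, ?_⟩
    · intro h
      have : e.symm (D ^ (k+1) * x) = 0 := by
        rw [h]; exact esymm_zero δ ι D e hcomm he
      rw [hx2, hD] at this
      exact shiftδ_ne_zero hfne this
    · rw [hx2, ordF_eq, hD, ordF_shiftδ hfne, ← ordF_eq, hord]; omega
    · rw [hx2, hD]
      have h1 : k + 1 + ordOf e x = ordF (e.symm (D ^ k * x)) + 1 := by
        rw [← ordF_eq, hord]; omega
      have h2 : ordF (e.symm (D ^ k * x)) = k + ordOf e x := hord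
      rw [h1, shiftδ_lead hfne, h2, hlead]

lemma iota_mul_ne_zero {a : K} (ha : a ≠ 0) {x : A} (hx : x ≠ 0) : ι a * x ≠ 0 := by
  intro h
  have := (esymm_eq_zero_iff δ ι D e hcomm he _).2 h
  rw [esymm_iota_mul δ ι D e hcomm he] at this
  exact hx ((esymm_eq_zero_iff δ ι D e hcomm he x).1 (by
    have := congrArg (fun g => a⁻¹ • g) this
    simpa [smul_smul, inv_mul_cancel₀ ha] using this))

lemma ordOf_iota_mul {a : K} (ha : a ≠ 0) (x : A) :
    ordOf e (ι a * x) = ordOf e x := by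
  rw [ordOf, esymm_iota_mul δ ι D e hcomm he, ordOf, Finsupp.support_smul_eq ha]

lemma coeff_finset_sum {β : Type*} (s : Finset β) (g : β → A) (j : ℕ) :
    e.symm (∑ b ∈ s, g b) j = ∑ b ∈ s, e.symm (g b) j := by
  have := map_sum (((Finsupp.applyAddHom j : (ℕ →₀ K) →+ K)).comp
    (EA δ ι D e hcomm he).symm.toAddMonoidHom) g s
  exact this

lemma mul_expand (f : ℕ →₀ K) (y : A) :
    e f * y = ∑ i ∈ f.support, ι (f i) * (D ^ i * y) := by
  rw [he, Finsupp.sum, Finset.sum_mul]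
  exact Finset.sum_congr rfl fun i _ => by rw [mul_assoc]

lemma coeff_mul (x y : A) (j : ℕ) :
    e.symm (x * y) j = ∑ i ∈ (e.symm x).support, (e.symm x) i * e.symm (D ^ i * y) j := by
  conv_lhs => rw [← e.apply_symm_apply x, mul_expand δ ι D e hcomm he,
    coeff_finset_sum δ ι D e hcomm he]
  rw [← e.apply_symm_apply x]
  refine Finset.sum_congr rfl fun i _ => ?_
  rw [esymm_iota_mul δ ι D e hcomm he]
  simp

lemma mul_struct {x y : A} (hx : x ≠ 0) (hy : y ≠ 0) :
    x * y ≠ 0 ∧ ordOf e (x * y) = ordOf e x + ordOf e y ∧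
      e.symm (x * y) (ordOf e x + ordOf e y)
        = e.symm x (ordOf e x) * e.symm y (ordOf e y) := by
  have hfx : e.symm x ≠ 0 := fun h => hx ((esymm_eq_zero_iff δ ι D e hcomm he x).1 h)
  set m := ordOf e x with hm
  set r := ordOf e y with hr
  have hhigh : ∀ i ∈ (e.symm x).support, ∀ j, i + r < j → e.symm (D ^ i * y) j = 0 := by
    intro i hi j hj
    have := (Dpow_mul δ ι D e hcomm he i hy).2.1
    exact coeff_eq_zero_of_ordF_lt (by rw [← ordF_eq, this, ← hr] at *; omega)
  have hlead : e.symm (x * y) (m + r) = e.symm x m * e.symm y r := by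
    rw [coeff_mul δ ι D e hcomm he]
    rw [Finset.sum_eq_single m]
    · rw [(Dpow_mul δ ι D e hcomm he m hy).2.2]
    · intro i hi hne
      have hile : i ≤ m := by
        have := Finset.le_sup (f := id) hi; simpa [hm, ordOf] using this
      rw [hhigh i hi _ (by omega), mul_zero]
    · intro hns
      rw [Finsupp.notMem_support_iff.1 hns, zero_mul]
  have hlead_ne : e.symm (x * y) (m + r) ≠ 0 := by
    rw [hlead]
    exact mul_ne_zero (lead_ne_zero hfx)
      (lead_ne_zero (fun h => hy ((esymm_eq_zero_iff δ ι D e hcomm he y).1 h)))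
  have hne : x * y ≠ 0 := by
    intro h
    rw [h, esymm_zero δ ι D e hcomm he] at hlead_ne
    exact hlead_ne rfl
  have hub : ∀ j, m + r < j → e.symm (x * y) j = 0 := by
    intro j hj
    rw [coeff_mul δ ι D e hcomm he]
    refine Finset.sum_eq_zero fun i hi => ?_
    have hile : i ≤ m := by
      have := Finset.le_sup (f := id) hi; simpa [hm, ordOf] using this
    rw [hhigh i hi _ (by omega), mul_zero]
  refine ⟨hne, le_antisymm (ordF_le_of_coeff_zero hub) (le_ordF_of_ne hlead_ne), hlead⟩

lemma mul_ne_zero' {x y : A} (hx : x ≠ 0) (hy : y ≠ 0) : x * y ≠ 0 :=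
  (mul_struct δ ι D e hcomm he hx hy).1

lemma ordOf_mul {x y : A} (hx : x ≠ 0) (hy : y ≠ 0) :
    ordOf e (x * y) = ordOf e x + ordOf e y :=
  (mul_struct δ ι D e hcomm he hx hy).2.1

lemma mul_left_cancel₀' {x y : A} (hy : y ≠ 0) (h : x * y = 0) : x = 0 := by
  by_contra hx
  exact mul_ne_zero' δ ι D e hcomm he hx hy h


lemma div_algo {N : A} (hN : N ≠ 0) (M : A) :
    ∃ U R, M = U * N + R ∧ (R = 0 ∨ ordOf e R < ordOf e N) := by
  suffices H : ∀ m M, ordOf e M ≤ m →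
      ∃ U R, M = U * N + R ∧ (R = 0 ∨ ordOf e R < ordOf e N) from
    H (ordOf e M) M le_rfl
  intro m
  induction m using Nat.strong_induction_on with
  | _ m ih =>
  intro M hm
  by_cases hM0 : M = 0
  · exact ⟨0, 0, by simp [hM0], Or.inl rfl⟩
  by_cases hlt : ordOf e M < ordOf e N
  · exact ⟨0, M, by simp, Or.inr hlt⟩
  push_neg at hlt
  have hfM : e.symm M ≠ 0 := fun h => hM0 ((esymm_eq_zero_iff δ ι D e hcomm he M).1 h)
  have hfN : e.symm N ≠ 0 := fun h => hN ((esymm_eq_zero_iff δ ι D e hcomm he N).1 h)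
  set c := e.symm M (ordOf e M) * (e.symm N (ordOf e N))⁻¹ with hc_def
  have hc : c ≠ 0 := mul_ne_zero (lead_ne_zero hfM) (inv_ne_zero (lead_ne_zero hfN))
  set d := ordOf e M - ordOf e N with hd_def
  obtain ⟨hDN0, hDNord, hDNlead⟩ := Dpow_mul δ ι D e hcomm he d hN
  set T := ι c * (D ^ d * N) with hT_def
  have hT_ne : T ≠ 0 := iota_mul_ne_zero δ ι D e hcomm he hc hDN0
  have hTord : ordOf e T = ordOf e M := by
    rw [hT_def, ordOf_iota_mul δ ι D e hcomm he hc, hDNord]; omega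
  have hTcoeff : ∀ j, e.symm T j = c * e.symm (D ^ d * N) j := by
    intro j; rw [hT_def, esymm_iota_mul δ ι D e hcomm he]; simp
  have hTlead : e.symm T (ordOf e M) = e.symm M (ordOf e M) := by
    rw [hTcoeff]
    have hdm : ordOf e M = d + ordOf e N := by omega
    have hlN : (e.symm N) (ordOf e N) ≠ 0 := lead_ne_zero hfN
    rw [hdm, hDNlead, hc_def, mul_assoc, inv_mul_cancel₀ hlN, mul_one, ← hdm]
  have hhigh : ∀ j, ordOf e M ≤ j → e.symm (M - T) j = 0 := by
    intro j hj
    rw [esymm_sub δ ι D e hcomm he, Finsupp.sub_apply]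
    rcases eq_or_lt_of_le hj with hj' | hj'
    · rw [← hj', hTlead, sub_self]
    · rw [coeff_eq_zero_of_ordF_lt (f := e.symm M) (by rw [← ordF_eq] at *; omega),
        coeff_eq_zero_of_ordF_lt (f := e.symm T) (by rw [← ordF_eq, hTord] at *; omega),
        sub_self]
  by_cases hM' : M - T = 0
  · refine ⟨ι c * D ^ d, 0, ?_, Or.inl rfl⟩
    have : M = T := by rw [← sub_eq_zero]; exact hM'
    rw [this, add_zero, hT_def, mul_assoc]
  · have hfM' : e.symm (M - T) ≠ 0 :=
      fun h => hM' ((esymm_eq_zero_iff δ ι D e hcomm he _).1 h)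
    have hord' : ordOf e (M - T) < ordOf e M := ordF_lt_of_coeff_zero hfM' hhigh
    obtain ⟨U, R, hUR, hR⟩ := ih (ordOf e (M - T)) (by omega) (M - T) le_rfl
    refine ⟨ι c * D ^ d + U, R, ?_, hR⟩
    have h1 : M = T + (M - T) := by abel
    rw [h1, hUR, hT_def, add_mul, mul_assoc, add_assoc]


lemma phiV_add (n : ℕ) (x y : A) : phiV e n (x + y) = phiV e n x + phiV e n y := by
  funext j
  simp [phiV, esymm_add δ ι D e hcomm he]

lemma phiV_iota (n : ℕ) (a : K) (x : A) : phiV e n (ι a * x) = a • phiV e n x := by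
  funext j
  simp [phiV, esymm_iota_mul δ ι D e hcomm he]

lemma phiV_zero (n : ℕ) : phiV e n (0 : A) = 0 := by
  funext j
  simp [phiV, esymm_zero δ ι D e hcomm he]

lemma phiV_sum {β : Type*} (s : Finset β) (g : β → A) (n : ℕ) :
    phiV e n (∑ b ∈ s, g b) = ∑ b ∈ s, phiV e n (g b) := by
  funext j
  simp [phiV, coeff_finset_sum δ ι D e hcomm he, Finset.sum_apply]

omit hcomm he

lemma phiV_inj {n : ℕ} {x y : A} (hx : ∀ j, n < j → e.symm x j = 0)
    (hy : ∀ j, n < j → e.symm y j = 0) (h : phiV e n x = phiV e n y) : x = y := by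
  have : e.symm x = e.symm y := by
    ext i
    by_cases hi : i ≤ n
    · have := congrFun h ⟨n - i, by omega⟩
      simpa [phiV, Nat.sub_sub_self hi] using this
    · rw [hx i (by omega), hy i (by omega)]
  exact e.symm.injective this

/-- the finsupp with coefficients given by a `Fin m`-vector -/
def fF {m : ℕ} (c : Fin m → K) : ℕ →₀ K := ∑ j : Fin m, Finsupp.single (j : ℕ) (c j)

lemma fF_apply {m : ℕ} (c : Fin m → K) (i : ℕ) :
    fF c i = if h : i < m then c ⟨i, h⟩ else 0 := by
  rw [fF, Finsupp.finset_sum_apply]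
  by_cases h : i < m
  · rw [dif_pos h, Finset.sum_eq_single (⟨i, h⟩ : Fin m)]
    · simp
    · intro b _ hb
      exact Finsupp.single_eq_of_ne (fun hh => hb (Fin.ext hh.symm))
    · simp
  · rw [dif_neg h]
    exact Finset.sum_eq_zero fun b _ =>
      Finsupp.single_eq_of_ne (fun hh => h (hh ▸ b.isLt))

lemma fF_high {m : ℕ} (c : Fin m → K) (i : ℕ) (hi : m ≤ i) : fF c i = 0 := by
  rw [fF_apply, dif_neg (by omega)]

lemma fF_eq_zero {m : ℕ} {c : Fin m → K} (h : fF c = 0) : ∀ j, c j = 0 := by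
  intro j
  have := congrArg (fun g : ℕ →₀ K => g (j : ℕ)) h
  simpa [fF_apply, j.isLt] using this

lemma ordF_fF_lt {m : ℕ} {c : Fin m → K} (h : fF c ≠ 0) : ordF (fF c) < m :=
  ordF_lt_of_coeff_zero h (fF_high c)

include hcomm he

lemma e_single (i : ℕ) (a : K) : e (Finsupp.single i a) = ι a * D ^ i := by
  rw [he, Finsupp.sum_single_index (by simp)]

lemma phiV_e_mul (n : ℕ) (f : ℕ →₀ K) (L : A) :
    phiV e n (e f * L) = ∑ i ∈ f.support, f i • phiV e n (D ^ i * L) := by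
  rw [mul_expand δ ι D e hcomm he, phiV_sum δ ι D e hcomm he]
  exact Finset.sum_congr rfl fun i _ => phiV_iota δ ι D e hcomm he n (f i) _

lemma phiV_e_fF_mul {m : ℕ} (n : ℕ) (c : Fin m → K) (L : A) :
    phiV e n (e (fF c) * L) = ∑ j : Fin m, c j • phiV e n (D ^ (j : ℕ) * L) := by
  have h2 : e (fF c) = ∑ j : Fin m, ι (c j) * D ^ (j : ℕ) := by
    have h3 := map_sum (EA δ ι D e hcomm he)
      (fun j : Fin m => Finsupp.single (j : ℕ) (c j)) Finset.univ
    refine Eq.trans h3 (Finset.sum_congr rfl fun j _ => e_single δ ι D e hcomm he _ _)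
  have h1 : e (fF c) * L = ∑ j : Fin m, ι (c j) * (D ^ (j : ℕ) * L) := by
    rw [h2, Finset.sum_mul]
    exact Finset.sum_congr rfl fun j _ => mul_assoc _ _ _
  rw [h1, phiV_sum δ ι D e hcomm he]
  exact Finset.sum_congr rfl fun j _ => phiV_iota δ ι D e hcomm he n (c j) _


omit hcomm he
lemma ordOf_e (f : ℕ →₀ K) : ordOf e (e f) = ordF f := by
  rw [ordOf, Equiv.symm_apply_apply]; rfl
include hcomm he

lemma coeff_mul_high {x y : A} (mx : ℕ) (hx : ∀ i, mx < i → e.symm x i = 0)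
    {j : ℕ} (hj : mx + ordOf e y < j) : e.symm (x * y) j = 0 := by
  by_cases hx0 : x = 0
  · rw [hx0, zero_mul, esymm_zero δ ι D e hcomm he]; rfl
  by_cases hy0 : y = 0
  · rw [hy0, mul_zero, esymm_zero δ ι D e hcomm he]; rfl
  have hordx : ordOf e x ≤ mx := ordF_le_of_coeff_zero hx
  have := ordOf_mul δ ι D e hcomm he hx0 hy0
  exact coeff_eq_zero_of_ordF_lt (f := e.symm (x * y))
    (by rw [← ordF_eq] at *; omega)

lemma e_fF_eq_zero {m : ℕ} {c : Fin m → K} (h : e (fF c) = 0) : ∀ j, c j = 0 := by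
  apply fF_eq_zero
  apply e.injective
  rw [h, ← map_zero (EA δ ι D e hcomm he)]; rfl

end Basics
end

/-- with `ℓ = ord(lclm(L₁,L₂))`, the family
`{∂^{r₂}L₁, ..., L₁} ∪ {∂^{ℓ−r₂−1}L₂, ..., L₂}` is a maximal linearly independent
subfamily of `{∂^j L₁ : j ≤ r₂} ∪ {∂^j L₂ : j ≤ r₁}` (identified with coefficient
vectors in `K^{r₁+r₂+1}` via `φ_{r₁+r₂}`), and the span of the full family has
dimension `ℓ + 1`. -/
theorem span_dim_eq_ord_lclm_add_one [Field K] [Ring A]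
    (δ : K →+ K) (hLeib : ∀ a b : K, δ (a * b) = a * δ b + δ a * b)
    (ι : K →+* A) (D : A)
    (hcomm : ∀ a : K, D * ι a = ι a * D + ι (δ a))
    (e : (ℕ →₀ K) ≃ A)
    (he : ∀ f : ℕ →₀ K, e f = f.sum fun i a => ι a * D ^ i)
    (L₁ L₂ : A) (hL₁ : L₁ ≠ 0) (hL₂ : L₂ ≠ 0)
    (r₁ r₂ : ℕ) (hr₁ : ordOf e L₁ = r₁) (hr₂ : ordOf e L₂ = r₂)
    (Lc : A) (hLc : IsLCLM e ![L₁, L₂] Lc)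
    (ℓ : ℕ) (hℓ : ordOf e Lc = ℓ) :
    LinearIndependent K
      (Sum.elim
        (fun j : Fin (r₂ + 1) => phiV e (r₁ + r₂) (D ^ (j : ℕ) * L₁))
        (fun j : Fin (ℓ - r₂) => phiV e (r₁ + r₂) (D ^ (j : ℕ) * L₂))) ∧
    Submodule.span K
        (Set.range (Sum.elim
          (fun j : Fin (r₂ + 1) => phiV e (r₁ + r₂) (D ^ (j : ℕ) * L₁))
          (fun j : Fin (ℓ - r₂) => phiV e (r₁ + r₂) (D ^ (j : ℕ) * L₂)))) =
      Submodule.span K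
        (Set.range (Sum.elim
          (fun j : Fin (r₂ + 1) => phiV e (r₁ + r₂) (D ^ (j : ℕ) * L₁))
          (fun j : Fin (r₁ + 1) => phiV e (r₁ + r₂) (D ^ (j : ℕ) * L₂)))) ∧
    Module.finrank K
        (Submodule.span K
          (Set.range (Sum.elim
            (fun j : Fin (r₂ + 1) => phiV e (r₁ + r₂) (D ^ (j : ℕ) * L₁))
            (fun j : Fin (r₁ + 1) => phiV e (r₁ + r₂) (D ^ (j : ℕ) * L₂))))) =
      ℓ + 1 := by
  obtain ⟨⟨hLc0, hmulLc⟩, hmin⟩ := hLc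
  obtain ⟨Q₁, hQ₁⟩ := hmulLc 0
  obtain ⟨Q₂, hQ₂⟩ := hmulLc 1
  simp only [Matrix.cons_val_zero] at hQ₁
  simp only [Matrix.cons_val_one, Matrix.head_cons, Matrix.cons_val_zero] at hQ₂
  have hQ₁0 : Q₁ ≠ 0 := by rintro rfl; rw [zero_mul] at hQ₁; exact hLc0 hQ₁
  have hQ₂0 : Q₂ ≠ 0 := by rintro rfl; rw [zero_mul] at hQ₂; exact hLc0 hQ₂
  have hordQ₁ : ordOf e Q₁ + r₁ = ℓ := by
    rw [← hℓ, hQ₁, ordOf_mul δ ι D e hcomm he hQ₁0 hL₁, hr₁]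
  have hordQ₂ : ordOf e Q₂ + r₂ = ℓ := by
    rw [← hℓ, hQ₂, ordOf_mul δ ι D e hcomm he hQ₂0 hL₂, hr₂]
  have hr₂ℓ : r₂ ≤ ℓ := by omega
  have hr₁ℓ : r₁ ≤ ℓ := by omega
  set n := r₁ + r₂ with hn
  -- a linear relation among the φ-vectors gives an operator identity
  have hrel : ∀ (m₂ : ℕ), m₂ + r₂ ≤ n + 1 → ∀ (c : Fin (r₂+1) → K) (d : Fin m₂ → K),
      ((∑ j : Fin (r₂+1), c j • phiV e n (D ^ (j:ℕ) * L₁)) +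
        ∑ j : Fin m₂, d j • phiV e n (D ^ (j:ℕ) * L₂)) = 0 →
      e (fF c) * L₁ + e (fF d) * L₂ = 0 := by
    intro m₂ hm₂ c d hsum
    have hφ : phiV e n (e (fF c) * L₁ + e (fF d) * L₂) = phiV e n 0 := by
      rw [phiV_add δ ι D e hcomm he, phiV_e_fF_mul δ ι D e hcomm he,
        phiV_e_fF_mul δ ι D e hcomm he, phiV_zero δ ι D e hcomm he, hsum]
    refine phiV_inj e ?_ ?_ hφ
    · intro j hj
      rw [esymm_add δ ι D e hcomm he, Finsupp.add_apply]
      rw [coeff_mul_high δ ι D e hcomm he r₂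
          (fun i hi => by rw [Equiv.symm_apply_apply]; exact fF_high c i (by omega))
          (by rw [hr₁]; omega),
        coeff_mul_high δ ι D e hcomm he (m₂ - 1)
          (fun i hi => by rw [Equiv.symm_apply_apply]; exact fF_high d i (by omega))
          (by rw [hr₂]; omega), add_zero]
    · intro j hj
      rw [esymm_zero δ ι D e hcomm he]; rfl
  -- ℓ ≤ n
  have hℓn : ℓ ≤ n := by
    have hBig : ¬ LinearIndependent K
        (Sum.elim (fun j : Fin (r₂+1) => phiV e n (D ^ (j:ℕ) * L₁))
          (fun j : Fin (r₁+1) => phiV e n (D ^ (j:ℕ) * L₂))) := by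
      intro h
      have hcard := h.fintype_card_le_finrank
      have hfr : Module.finrank K (Fin (n+1) → K) = n + 1 := Module.finrank_fin_fun K
      rw [hfr, Fintype.card_sum, Fintype.card_fin, Fintype.card_fin] at hcard
      omega
    obtain ⟨g, hgsum, i₀, hgne⟩ := Fintype.not_linearIndependent_iff.1 hBig
    rw [Fintype.sum_sum_type] at hgsum
    simp only [Sum.elim_inl, Sum.elim_inr] at hgsum
    have hPQ := hrel (r₁+1) (by omega) (fun a => g (Sum.inl a)) (fun a => g (Sum.inr a)) hgsum
    have hP0 : e (fF fun a => g (Sum.inl a)) ≠ 0 := by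
      intro h0
      have hc0 := e_fF_eq_zero δ ι D e hcomm he h0
      rw [h0, zero_mul, zero_add] at hPQ
      have hQ0 := mul_left_cancel₀' δ ι D e hcomm he hL₂ hPQ
      have hd0 := e_fF_eq_zero δ ι D e hcomm he hQ0
      cases i₀ with
      | inl a => exact hgne (hc0 a)
      | inr a => exact hgne (hd0 a)
    have hM0 : e (fF fun a => g (Sum.inl a)) * L₁ ≠ 0 :=
      mul_ne_zero' δ ι D e hcomm he hP0 hL₁
    have hMCLM : IsCLM ![L₁, L₂] (e (fF fun a => g (Sum.inl a)) * L₁) := by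
      refine ⟨hM0, fun i => ?_⟩
      fin_cases i
      · exact ⟨e (fF fun a => g (Sum.inl a)), by simp⟩
      · refine ⟨-(e (fF fun a => g (Sum.inr a))), ?_⟩
        simp only [Matrix.cons_val_one, Matrix.head_cons]
        rw [neg_mul]
        exact eq_neg_of_add_eq_zero_left hPQ
    have h1 := hmin _ hMCLM
    rw [hℓ] at h1
    have h2 : ordOf e (e (fF fun a => g (Sum.inl a)) * L₁)
        = ordOf e (e (fF fun a => g (Sum.inl a))) + r₁ := by
      rw [ordOf_mul δ ι D e hcomm he hP0 hL₁, hr₁]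
    have h3 : ordOf e (e (fF fun a => g (Sum.inl a))) ≤ r₂ := by
      rw [ordOf_e]
      have hne : fF (fun a => g (Sum.inl a)) ≠ (0 : ℕ →₀ K) := by
        intro hz
        apply hP0
        rw [hz, ← map_zero (EA δ ι D e hcomm he)]; rfl
      have := ordF_fF_lt hne
      omega
    omega
  -- Part 1 : linear independence of the small family
  have hindep : LinearIndependent K
      (Sum.elim (fun j : Fin (r₂ + 1) => phiV e n (D ^ (j : ℕ) * L₁))
        (fun j : Fin (ℓ - r₂) => phiV e n (D ^ (j : ℕ) * L₂))) := by
    refine Fintype.linearIndependent_iff.2 fun g hg => ?_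
    rw [Fintype.sum_sum_type] at hg
    simp only [Sum.elim_inl, Sum.elim_inr] at hg
    have hPQ := hrel (ℓ - r₂) (by omega) (fun a => g (Sum.inl a)) (fun a => g (Sum.inr a)) hg
    have hQzero : e (fF fun a => g (Sum.inr a)) = 0 := by
      by_contra hQne
      have hPne : e (fF fun a => g (Sum.inl a)) ≠ 0 := by
        intro h0
        rw [h0, zero_mul, zero_add] at hPQ
        exact hQne (mul_left_cancel₀' δ ι D e hcomm he hL₂ hPQ)
      have hM0 : e (fF fun a => g (Sum.inr a)) * L₂ ≠ 0 :=
        mul_ne_zero' δ ι D e hcomm he hQne hL₂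
      have hCLM : IsCLM ![L₁, L₂] (e (fF fun a => g (Sum.inr a)) * L₂) := by
        refine ⟨hM0, fun i => ?_⟩
        fin_cases i
        · refine ⟨-(e (fF fun a => g (Sum.inl a))), ?_⟩
          simp only [Matrix.cons_val_zero]
          rw [neg_mul]
          exact eq_neg_of_add_eq_zero_right hPQ
        · exact ⟨e (fF fun a => g (Sum.inr a)), by simp⟩
      have h1 := hmin _ hCLM
      rw [hℓ] at h1
      have h2 : ordOf e (e (fF fun a => g (Sum.inr a)) * L₂)
          = ordOf e (e (fF fun a => g (Sum.inr a))) + r₂ := by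
        rw [ordOf_mul δ ι D e hcomm he hQne hL₂, hr₂]
      have hne : fF (fun a => g (Sum.inr a)) ≠ (0 : ℕ →₀ K) := by
        intro hz
        apply hQne
        rw [hz, ← map_zero (EA δ ι D e hcomm he)]; rfl
      have h3 := ordF_fF_lt hne
      rw [ordOf_e] at h2
      omega
    have hd0 := e_fF_eq_zero δ ι D e hcomm he hQzero
    rw [hQzero, zero_mul, add_zero] at hPQ
    have hc0 := e_fF_eq_zero δ ι D e hcomm he
      (mul_left_cancel₀' δ ι D e hcomm he hL₁ hPQ)
    intro i
    cases i with
    | inl a => exact hc0 a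
    | inr a => exact hd0 a
  -- every φ(D^j L₂), j ≤ r₁, lies in the span of the small family
  have hw : ∀ j : ℕ, j ≤ r₁ → phiV e n (D ^ j * L₂) ∈ Submodule.span K
      (Set.range (Sum.elim (fun j : Fin (r₂ + 1) => phiV e n (D ^ (j : ℕ) * L₁))
        (fun j : Fin (ℓ - r₂) => phiV e n (D ^ (j : ℕ) * L₂)))) := by
    intro j
    induction j using Nat.strong_induction_on with
    | _ j ih =>
    intro hjr
    by_cases hjsmall : j < ℓ - r₂
    · exact Submodule.subset_span ⟨Sum.inr ⟨j, hjsmall⟩, rfl⟩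
    push_neg at hjsmall
    set t := j - (ℓ - r₂) with ht
    obtain ⟨hX0, hXord, hXlead⟩ := Dpow_mul δ ι D e hcomm he t hQ₂0
    set f := e.symm (D ^ t * Q₂) with hf
    have hfne : f ≠ 0 := fun h => hX0 ((esymm_eq_zero_iff δ ι D e hcomm he _).1 h)
    have hordf : ordF f = j := by
      have h5 : ordOf e (D ^ t * Q₂) = ordF f := rfl
      omega
    have hXL : e f * L₂ = D ^ t * (Q₁ * L₁) := by
      rw [hf, Equiv.apply_symm_apply, mul_assoc, ← hQ₂, hQ₁]
    obtain ⟨hY0, hYord, hYlead⟩ := Dpow_mul δ ι D e hcomm he t hQ₁0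
    have hYmem : phiV e n (D ^ t * (Q₁ * L₁)) ∈ Submodule.span K
        (Set.range (Sum.elim (fun j : Fin (r₂ + 1) => phiV e n (D ^ (j : ℕ) * L₁))
          (fun j : Fin (ℓ - r₂) => phiV e n (D ^ (j : ℕ) * L₂)))) := by
      have hY : D ^ t * (Q₁ * L₁) = e (e.symm (D ^ t * Q₁)) * L₁ := by
        rw [Equiv.apply_symm_apply, mul_assoc]
      rw [hY, phiV_e_mul δ ι D e hcomm he]
      refine Submodule.sum_mem _ fun i hi => Submodule.smul_mem _ _ ?_
      have hile : i ≤ ordF (e.symm (D ^ t * Q₁)) :=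
        le_ordF_of_ne (Finsupp.mem_support_iff.1 hi)
      have h6 : ordOf e (D ^ t * Q₁) = ordF (e.symm (D ^ t * Q₁)) := rfl
      have hir : i ≤ r₂ := by omega
      exact Submodule.subset_span ⟨Sum.inl ⟨i, by omega⟩, rfl⟩
    have hexp : phiV e n (e f * L₂) = ∑ i ∈ f.support, f i • phiV e n (D ^ i * L₂) :=
      phiV_e_mul δ ι D e hcomm he n f L₂
    have hfj : f j ≠ 0 := by rw [← hordf]; exact lead_ne_zero hfne
    have hjsupp : j ∈ f.support := Finsupp.mem_support_iff.2 hfj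
    have hsplit : f j • phiV e n (D ^ j * L₂) + ∑ i ∈ f.support.erase j,
        f i • phiV e n (D ^ i * L₂) = ∑ i ∈ f.support, f i • phiV e n (D ^ i * L₂) :=
      Finset.add_sum_erase _ (fun i => f i • phiV e n (D ^ i * L₂)) hjsupp
    have herasemem : ∑ i ∈ f.support.erase j, f i • phiV e n (D ^ i * L₂)
        ∈ Submodule.span K
        (Set.range (Sum.elim (fun j : Fin (r₂ + 1) => phiV e n (D ^ (j : ℕ) * L₁))
          (fun j : Fin (ℓ - r₂) => phiV e n (D ^ (j : ℕ) * L₂)))) := by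
      refine Submodule.sum_mem _ fun i hi => Submodule.smul_mem _ _ ?_
      have hine := Finset.ne_of_mem_erase hi
      have hilef : i ≤ ordF f :=
        le_ordF_of_ne (Finsupp.mem_support_iff.1 (Finset.mem_of_mem_erase hi))
      exact ih i (by omega) (by omega)
    have hmemXL : phiV e n (e f * L₂) ∈ Submodule.span K
        (Set.range (Sum.elim (fun j : Fin (r₂ + 1) => phiV e n (D ^ (j : ℕ) * L₁))
          (fun j : Fin (ℓ - r₂) => phiV e n (D ^ (j : ℕ) * L₂)))) := by
      rw [hXL]; exact hYmem
    have hlead_mem : f j • phiV e n (D ^ j * L₂) ∈ Submodule.span K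
        (Set.range (Sum.elim (fun j : Fin (r₂ + 1) => phiV e n (D ^ (j : ℕ) * L₁))
          (fun j : Fin (ℓ - r₂) => phiV e n (D ^ (j : ℕ) * L₂)))) := by
      have heq : f j • phiV e n (D ^ j * L₂) = phiV e n (e f * L₂)
          - ∑ i ∈ f.support.erase j, f i • phiV e n (D ^ i * L₂) := by
        rw [hexp, ← hsplit]; abel
      rw [heq]
      exact Submodule.sub_mem _ hmemXL herasemem
    have := Submodule.smul_mem _ (f j)⁻¹ hlead_mem
    rwa [smul_smul, inv_mul_cancel₀ hfj, one_smul] at this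
  -- span equality
  have hspan : Submodule.span K
        (Set.range (Sum.elim (fun j : Fin (r₂ + 1) => phiV e n (D ^ (j : ℕ) * L₁))
          (fun j : Fin (ℓ - r₂) => phiV e n (D ^ (j : ℕ) * L₂)))) =
      Submodule.span K
        (Set.range (Sum.elim (fun j : Fin (r₂ + 1) => phiV e n (D ^ (j : ℕ) * L₁))
          (fun j : Fin (r₁ + 1) => phiV e n (D ^ (j : ℕ) * L₂)))) := by
    apply le_antisymm
    · rw [Submodule.span_le]
      rintro v ⟨i, rfl⟩
      cases i with
      | inl a => exact Submodule.subset_span ⟨Sum.inl a, rfl⟩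
      | inr a =>
        refine Submodule.subset_span ⟨Sum.inr ⟨(a : ℕ), by omega⟩, ?_⟩
        simp only [Sum.elim_inr]
    · rw [Submodule.span_le]
      rintro v ⟨i, rfl⟩
      cases i with
      | inl a => exact Submodule.subset_span ⟨Sum.inl a, rfl⟩
      | inr a => exact hw (a : ℕ) (by omega)
  refine ⟨hindep, hspan, ?_⟩
  rw [← hspan, finrank_span_eq_card hindep, Fintype.card_sum, Fintype.card_fin, Fintype.card_fin]
  omega
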